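/- Let c be a nonzero integer. The equation X⁴ − Y⁴ = c·Z² has a rational solution with X·Y·Z ≠ 0 if and only if |c| is the area of a right triangle with rational sides, i.e., there exist positive rationals a, b, h with a² + b² = h² and a·b/2 = |c|. -/

import Mathlib

lemma no_rat_sqrt2 (q : ℚ) : q ^ 2 ≠ 2 := by
  intro h
  have h' : ((q : ℝ)) ^ 2 = 2 := by exact_mod_cast congrArg (Rat.cast (K := ℝ)) h
  have h2 : Real.sqrt 2 = |(q : ℝ)| := by rw [← h', Real.sqrt_sq_eq_abs]
  have := irrational_sqrt_two
  rw [h2, ← Rat.cast_abs] at this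
  exact (Rat.not_irrational |q|) this

lemma quartic_to_triangle (n u v w : ℚ) (hn : 0 < n) (hu : 0 < u) (hv : 0 < v)
    (hw : 0 < w) (heq : u ^ 4 - v ^ 4 = n * w ^ 2) :
    ∃ a b h : ℚ, 0 < a ∧ 0 < b ∧ 0 < h ∧ a ^ 2 + b ^ 2 = h ^ 2 ∧ a * b / 2 = n := by
  have hu4 : 0 < u ^ 4 := pow_pos hu 4
  have hv4 : 0 < v ^ 4 := pow_pos hv 4
  refine ⟨(u ^ 4 - v ^ 4) / (u * v * w), 2 * u * v / w, (u ^ 4 + v ^ 4) / (u * v * w),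
    ?_, ?_, ?_, ?_, ?_⟩
  · exact div_pos (heq ▸ mul_pos hn (pow_pos hw 2)) (by positivity)
  · positivity
  · exact div_pos (by positivity) (by positivity)
  · field_simp
    ring
  · field_simp
    linear_combination heq

lemma triangle_to_quartic (n a b h : ℚ) (ha : 0 < a) (hb : 0 < b) (hh : 0 < h)
    (hpyth : a ^ 2 + b ^ 2 = h ^ 2) (harea : a * b / 2 = n) :
    ∃ X Y Z : ℚ, X * Y * Z ≠ 0 ∧ X ^ 4 - Y ^ 4 = n * Z ^ 2 := by
  have hab : a ≠ b := by
    rintro rfl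
    exact no_rat_sqrt2 (h / a) (by field_simp; linear_combination -hpyth)
  refine ⟨(a + b) / 2, (a - b) / 2, h, ?_, ?_⟩
  · have h1 : (a + b) / 2 ≠ 0 := by positivity
    have h2 : (a - b) / 2 ≠ 0 := by
      simpa using sub_ne_zero.mpr hab
    exact mul_ne_zero (mul_ne_zero h1 h2) hh.ne'
  · linear_combination (h ^ 2) * harea + (a * b / 2) * hpyth

/-- For a nonzero integer `c`, the equation `X⁴ − Y⁴ = cZ²` has a rational solution
with `XYZ ≠ 0` if and only if `|c|` is the area of a right triangle with rational
sides. -/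
theorem quartic_solvable_iff_congruent (c : ℤ) (hc : c ≠ 0) :
    (∃ X Y Z : ℚ, X * Y * Z ≠ 0 ∧ X ^ 4 - Y ^ 4 = (c : ℚ) * Z ^ 2) ↔
    (∃ a b h : ℚ, 0 < a ∧ 0 < b ∧ 0 < h ∧ a ^ 2 + b ^ 2 = h ^ 2 ∧
      a * b / 2 = (|c| : ℤ)) := by
  constructor
  · rintro ⟨X, Y, Z, hne, heq⟩
    have hX : X ≠ 0 := fun e => hne (by simp [e])
    have hY : Y ≠ 0 := fun e => hne (by simp [e])
    have hZ : Z ≠ 0 := fun e => hne (by simp [e])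
    have hX4 : |X| ^ 4 = X ^ 4 := by rw [pow_abs, abs_of_nonneg (by positivity)]
    have hY4 : |Y| ^ 4 = Y ^ 4 := by rw [pow_abs, abs_of_nonneg (by positivity)]
    have hZ2 : |Z| ^ 2 = Z ^ 2 := by rw [pow_abs, abs_of_nonneg (by positivity)]
    rcases lt_or_gt_of_ne hc with hcneg | hcpos
    · have hc' : (0:ℚ) < -(c:ℚ) := by
        have : (c:ℚ) < 0 := by exact_mod_cast hcneg
        linarith
      obtain ⟨a, b, h, ha, hb, hh, hpyth, harea⟩ :=
        quartic_to_triangle (-(c:ℚ)) |Y| |X| |Z| hc' (abs_pos.mpr hY) (abs_pos.mpr hX)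
          (abs_pos.mpr hZ) (by rw [hX4, hY4, hZ2]; linear_combination -heq)
      refine ⟨a, b, h, ha, hb, hh, hpyth, ?_⟩
      rw [harea, abs_of_neg hcneg]
      push_cast
      ring
    · have hc' : (0:ℚ) < (c:ℚ) := by exact_mod_cast hcpos
      obtain ⟨a, b, h, ha, hb, hh, hpyth, harea⟩ :=
        quartic_to_triangle ((c:ℚ)) |X| |Y| |Z| hc' (abs_pos.mpr hX) (abs_pos.mpr hY)
          (abs_pos.mpr hZ) (by rw [hX4, hY4, hZ2]; linear_combination heq)
      refine ⟨a, b, h, ha, hb, hh, hpyth, ?_⟩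
      rw [harea, abs_of_pos hcpos]
  · rintro ⟨a, b, h, ha, hb, hh, hpyth, harea⟩
    rcases lt_or_gt_of_ne hc with hcneg | hcpos
    · rw [abs_of_neg hcneg] at harea
      obtain ⟨X, Y, Z, hne, heq⟩ :=
        triangle_to_quartic (-(c:ℚ)) a b h ha hb hh hpyth (by rw [harea]; push_cast; ring)
      refine ⟨Y, X, Z, fun e => hne ?_, by linear_combination -heq⟩
      rcases mul_eq_zero.mp e with e' | e'
      · rcases mul_eq_zero.mp e' with e'' | e'' <;> simp [e'']
      · simp [e']
    · rw [abs_of_pos hcpos] at harea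
      exact triangle_to_quartic ((c:ℚ)) a b h ha hb hh hpyth harea
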